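/- Let (S_ξ)_{ξ∈Ξ} be a nondegenerate family of nonzero symmetric gauges in ℝ^N. A gauge S ⊆ ℝ^N belongs to π↑(Ξ) if and only if for every n ≥ 1, all vectors x_1, …, x_n ∈ ℝ^N not all zero, and every z ∈ ℝ^N, one has h_S(z) ≤ (Σ_{k=1}^n h_S(x_k)) · sup_{ξ∈Ξ} [ h_{S_ξ}(z) / Σ_{k=1}^n h_{S_ξ}(x_k) ] (the supremum on the right is finite by nondegeneracy, and the denominators are positive since nondegenerate families of nonzero symmetric gauges have h_{S_ξ}(x) > 0 for x ≠ 0). -/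

import Mathlib

open Pointwise

/-- The support function `h_K(x) = sup{⟨x, y⟩ : y ∈ K}` of `K ⊆ ℝ^N`. -/
noncomputable def suppFn {N : ℕ} (K : Set (EuclideanSpace ℝ (Fin N)))
    (x : EuclideanSpace ℝ (Fin N)) : ℝ :=
  sSup ((fun y => (inner ℝ x y : ℝ)) '' K)

/-- A gauge in `ℝ^N`: a compact convex set containing the origin. -/
def IsGauge {N : ℕ} (K : Set (EuclideanSpace ℝ (Fin N))) : Prop :=
  IsCompact K ∧ Convex ℝ K ∧ (0 : EuclideanSpace ℝ (Fin N)) ∈ K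

/-- A family of gauges is nondegenerate if `sup_ξ ‖A‖_{S_ξ} < +∞` for every
linear operator `A` on `ℝ^N`, i.e. there is `C` such that for each `ξ` and each
`x ∈ S ξ` the gauge value `‖A x‖_{S ξ} = inf{β > 0 : A x ∈ β • S ξ}` is
attained below `C`. -/
def Nondegenerate {N : ℕ} {Ξ : Type*}
    (S : Ξ → Set (EuclideanSpace ℝ (Fin N))) : Prop :=
  ∀ A : EuclideanSpace ℝ (Fin N) →ₗ[ℝ] EuclideanSpace ℝ (Fin N),
    ∃ C : ℝ, ∀ ξ, ∀ x ∈ S ξ, ∃ β : ℝ, 0 < β ∧ β ≤ C ∧ A x ∈ β • S ξ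

/-- Closedness of a collection of (nonempty compact) subsets of `ℝ^N` in the
topology of the Hausdorff metric. -/
def IsHausdorffClosed {N : ℕ} (C : Set (Set (EuclideanSpace ℝ (Fin N)))) : Prop :=
  IsClosed {K : TopologicalSpace.NonemptyCompacts (EuclideanSpace ℝ (Fin N)) |
    (K : Set (EuclideanSpace ℝ (Fin N))) ∈ C}

/-- `π↑(F)`: the least Hausdorff-closed cone of gauges containing `F` that is
closed under the join `K ∨ L = conv (K ∪ L)`. -/
def piUp {N : ℕ} (F : Set (Set (EuclideanSpace ℝ (Fin N)))) :
    Set (Set (EuclideanSpace ℝ (Fin N))) :=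
  ⋂₀ {C | (∀ K ∈ C, IsGauge K) ∧ IsHausdorffClosed C ∧ F ⊆ C ∧
      (∀ K ∈ C, ∀ L ∈ C, K + L ∈ C) ∧
      (∀ K ∈ C, ∀ α : ℝ, 0 ≤ α → α • K ∈ C) ∧
      (∀ K ∈ C, ∀ L ∈ C, convexHull ℝ (K ∪ L) ∈ C)}

/-- `π↓(F)`: the least Hausdorff-closed cone of gauges containing `F` that is
closed under the meet `K ∧ L = K ∩ L`. -/
def piDown {N : ℕ} (F : Set (Set (EuclideanSpace ℝ (Fin N)))) :
    Set (Set (EuclideanSpace ℝ (Fin N))) :=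
  ⋂₀ {C | (∀ K ∈ C, IsGauge K) ∧ IsHausdorffClosed C ∧ F ⊆ C ∧
      (∀ K ∈ C, ∀ L ∈ C, K + L ∈ C) ∧
      (∀ K ∈ C, ∀ α : ℝ, 0 ≤ α → α • K ∈ C) ∧
      (∀ K ∈ C, ∀ L ∈ C, K ∩ L ∈ C)}

/-- `π(F)`: the least Hausdorff-closed cone of gauges containing `F` that is
closed under both the join and the meet. -/
def piBoth {N : ℕ} (F : Set (Set (EuclideanSpace ℝ (Fin N)))) :
    Set (Set (EuclideanSpace ℝ (Fin N))) :=
  ⋂₀ {C | (∀ K ∈ C, IsGauge K) ∧ IsHausdorffClosed C ∧ F ⊆ C ∧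
      (∀ K ∈ C, ∀ L ∈ C, K + L ∈ C) ∧
      (∀ K ∈ C, ∀ α : ℝ, 0 ≤ α → α • K ∈ C) ∧
      (∀ K ∈ C, ∀ L ∈ C, convexHull ℝ (K ∪ L) ∈ C) ∧
      (∀ K ∈ C, ∀ L ∈ C, K ∩ L ∈ C)}

section Aux

variable {N : ℕ}
local notation "V" => EuclideanSpace ℝ (Fin N)
lemma IsGauge.nonempty {K : Set V} (hK : IsGauge K) : K.Nonempty := ⟨0, hK.2.2⟩
lemma suppFn_bddAbove {K : Set V} (hK : IsCompact K) (x : V) :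
    BddAbove ((fun y => (inner ℝ x y : ℝ)) '' K) :=
  (hK.image (continuous_const.inner continuous_id)).bddAbove
lemma le_suppFn_of_mem {K : Set V} (hK : IsCompact K) {x y : V} (hy : y ∈ K) :
    (inner ℝ x y : ℝ) ≤ suppFn K x :=
  le_csSup (suppFn_bddAbove hK x) ⟨y, hy, rfl⟩
lemma suppFn_le {K : Set V} (hne : K.Nonempty) {x : V} {c : ℝ}
    (h : ∀ y ∈ K, (inner ℝ x y : ℝ) ≤ c) : suppFn K x ≤ c :=
  csSup_le (hne.image _) (by rintro _ ⟨y, hy, rfl⟩; exact h y hy)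
lemma suppFn_nonneg {K : Set V} (hK : IsGauge K) (x : V) : 0 ≤ suppFn K x := by
  have := le_suppFn_of_mem hK.1 (x := x) hK.2.2
  simpa using this
lemma suppFn_zero {K : Set V} (hK : IsGauge K) : suppFn K 0 = 0 :=
  le_antisymm (suppFn_le hK.nonempty fun y _ => by simp) (suppFn_nonneg hK 0)

-- new material
lemma suppFn_smul_set {K : Set V} (hK : IsCompact K) (hne : K.Nonempty)
    {α : ℝ} (hα : 0 ≤ α) (x : V) : suppFn (α • K) x = α * suppFn K x := by
  have himg : (fun y => (inner ℝ x y : ℝ)) '' (α • K)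
      = α • ((fun y => (inner ℝ x y : ℝ)) '' K) := by
    rw [show (α • K) = (α • ·) '' K from rfl, Set.image_image,
      show (α • ((fun y => (inner ℝ x y : ℝ)) '' K)) = (α • ·) '' _ from rfl, Set.image_image]
    refine Set.image_congr fun y _ => ?_
    exact real_inner_smul_right _ _ _
  rw [suppFn, himg, Real.sSup_smul_of_nonneg hα, smul_eq_mul]; rfl

lemma suppFn_smul_vec {K : Set V} (hK : IsCompact K) (hne : K.Nonempty)
    {α : ℝ} (hα : 0 ≤ α) (x : V) : suppFn K (α • x) = α * suppFn K x := by
  have himg : (fun y => (inner ℝ (α • x) y : ℝ)) '' K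
      = α • ((fun y => (inner ℝ x y : ℝ)) '' K) := by
    rw [show (α • ((fun y => (inner ℝ x y : ℝ)) '' K)) = (α • ·) '' _ from rfl, Set.image_image]
    refine Set.image_congr fun y _ => ?_
    exact real_inner_smul_left _ _ _
  rw [suppFn, himg, Real.sSup_smul_of_nonneg hα, smul_eq_mul]; rfl

lemma suppFn_add {K L : Set V} (hK : IsCompact K) (hKne : K.Nonempty)
    (hL : IsCompact L) (hLne : L.Nonempty) (x : V) :
    suppFn (K + L) x = suppFn K x + suppFn L x := by
  have hKL : IsCompact (K + L) := hK.add hL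
  refine le_antisymm ?_ ?_
  · refine suppFn_le (hKne.add hLne) ?_
    rintro y ⟨a, ha, b, hb, rfl⟩
    rw [inner_add_right]
    exact add_le_add (le_suppFn_of_mem hK ha) (le_suppFn_of_mem hL hb)
  · have H : ∀ a ∈ K, suppFn L x ≤ suppFn (K + L) x - (inner ℝ x a : ℝ) := by
      intro a ha
      refine suppFn_le hLne fun b hb => ?_
      have : (inner ℝ x (a + b) : ℝ) ≤ suppFn (K + L) x :=
        le_suppFn_of_mem hKL (Set.add_mem_add ha hb)
      rw [inner_add_right] at this; linarith
    have : suppFn K x ≤ suppFn (K + L) x - suppFn L x := by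
      refine suppFn_le hKne fun a ha => ?_
      have := H a ha; linarith
    linarith

lemma suppFn_subadd {K : Set V} (hK : IsCompact K) (hne : K.Nonempty) (x y : V) :
    suppFn K (x + y) ≤ suppFn K x + suppFn K y := by
  refine suppFn_le hne fun a ha => ?_
  rw [inner_add_left]
  exact add_le_add (le_suppFn_of_mem hK ha) (le_suppFn_of_mem hK ha)

lemma suppFn_convexHull {A : Set V} (hne : A.Nonempty)
    (hbdd : ∀ x : V, BddAbove ((fun y => (inner ℝ x y : ℝ)) '' A)) (x : V) :
    suppFn (convexHull ℝ A) x = suppFn A x := by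
  have hsub : convexHull ℝ A ⊆ {y : V | (inner ℝ x y : ℝ) ≤ suppFn A x} := by
    refine convexHull_min (fun y hy => le_csSup (hbdd x) ⟨y, hy, rfl⟩) ?_
    exact convex_halfSpace_le (by exact ⟨fun a b => inner_add_right x a b,
      fun c a => real_inner_smul_right x a c⟩) _
  refine le_antisymm ?_ ?_
  · exact suppFn_le (hne.mono (subset_convexHull ℝ A)) fun y hy => hsub hy
  · refine csSup_le (hne.image _) ?_
    rintro _ ⟨y, hy, rfl⟩
    refine le_csSup ⟨suppFn A x, ?_⟩ ⟨y, subset_convexHull ℝ A hy, rfl⟩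
    rintro _ ⟨z, hz, rfl⟩
    exact hsub hz

lemma suppFn_union {K L : Set V} (hK : IsCompact K) (hKne : K.Nonempty)
    (hL : IsCompact L) (hLne : L.Nonempty) (x : V) :
    suppFn (K ∪ L) x = max (suppFn K x) (suppFn L x) := by
  rw [suppFn, Set.image_union]
  exact csSup_union (suppFn_bddAbove hK x) (hKne.image _) (suppFn_bddAbove hL x) (hLne.image _)

lemma suppFn_neg_symm {K : Set V} (hK : IsCompact K) (hne : K.Nonempty)
    (hsymm : K = -K) (x : V) : suppFn K (-x) = suppFn K x := by
  have key : ∀ z : V, suppFn K (-z) ≤ suppFn K z := by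
    intro z
    refine suppFn_le hne fun y hy => ?_
    have hy' : -y ∈ K := by rw [hsymm] at hy; exact Set.mem_neg.mp (by simpa using hy)
    have := le_suppFn_of_mem hK (x := z) hy'
    rw [inner_neg_right] at this
    rw [inner_neg_left]
    linarith
  have := key (-x); rw [neg_neg] at this
  exact le_antisymm (key x) this

lemma suppFn_zero' {K : Set V} (hKc : IsCompact K) (hKne : K.Nonempty) :
    suppFn K (0 : V) = 0 := by
  refine le_antisymm (suppFn_le hKne fun y _ => by simp) ?_
  obtain ⟨y, hy⟩ := hKne
  have := le_suppFn_of_mem hKc (x := (0 : V)) hy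
  simpa using this

open Metric in
lemma suppFn_dist_le {K T : Set V} (hKc : IsCompact K) (hKne : K.Nonempty)
    (hTc : IsCompact T) (hTne : T.Nonempty) (x : V) :
    suppFn K x ≤ suppFn T x + hausdorffDist K T * ‖x‖ := by
  have hfin : EMetric.hausdorffEdist K T ≠ ⊤ :=
    hausdorffEdist_ne_top_of_nonempty_of_bounded hKne hTne hKc.isBounded hTc.isBounded
  have key : ∀ d, hausdorffDist K T < d → suppFn K x ≤ suppFn T x + d * ‖x‖ := by
    intro d hd
    refine suppFn_le hKne fun p hp => ?_
    obtain ⟨q, hq, hpq⟩ := exists_dist_lt_of_hausdorffDist_lt hp hd hfin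
    have h1 : (inner ℝ x p : ℝ) = (inner ℝ x q : ℝ) + (inner ℝ x (p - q) : ℝ) := by
      rw [inner_sub_right]; ring
    have h2 : (inner ℝ x (p - q) : ℝ) ≤ ‖x‖ * ‖p - q‖ := real_inner_le_norm x (p - q)
    have h3 : ‖p - q‖ ≤ d := by rw [← dist_eq_norm]; exact hpq.le
    have h4 : (inner ℝ x q : ℝ) ≤ suppFn T x := le_suppFn_of_mem hTc hq
    have h5 : ‖x‖ * ‖p - q‖ ≤ d * ‖x‖ := by
      rw [mul_comm]; exact mul_le_mul_of_nonneg_right h3 (norm_nonneg x)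
    linarith
  rcases eq_or_ne x 0 with rfl | hx
  · simp only [norm_zero, mul_zero, add_zero]
    rw [suppFn_zero' hKc hKne, suppFn_zero' hTc hTne]
  · refine le_of_forall_pos_le_add fun ε hε => ?_
    have hx' : 0 < ‖x‖ := norm_pos_iff.mpr hx
    have := key (hausdorffDist K T + ε / ‖x‖) (by
      have : 0 < ε / ‖x‖ := div_pos hε hx'
      linarith)
    have heq : (hausdorffDist K T + ε / ‖x‖) * ‖x‖
        = hausdorffDist K T * ‖x‖ + ε := by
      field_simp
    linarith

open Metric in
lemma exists_close_of_suppFn_le {K T : Set V} (hKc : IsCompact K)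
    (hT : IsGauge T) {ε : ℝ} (hε : 0 ≤ ε)
    (h : ∀ x, suppFn K x ≤ suppFn T x + ε * ‖x‖) :
    ∀ p ∈ K, ∃ q ∈ T, dist p q ≤ ε := by
  intro p hp
  obtain ⟨q, hq, hmin⟩ := exists_norm_eq_iInf_of_complete_convex hT.nonempty
    (hT.1.isComplete) hT.2.1 p
  refine ⟨q, hq, ?_⟩
  have hvar : ∀ w ∈ T, (inner ℝ (p - q) (w - q) : ℝ) ≤ 0 :=
    (norm_eq_iInf_iff_real_inner_le_zero hT.2.1 hq).mp hmin
  have h1 : suppFn T (p - q) ≤ (inner ℝ (p - q) q : ℝ) := by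
    refine suppFn_le hT.nonempty fun w hw => ?_
    have := hvar w hw
    rw [inner_sub_right] at this
    linarith
  have h2 : (inner ℝ (p - q) p : ℝ) ≤ suppFn K (p - q) := le_suppFn_of_mem hKc hp
  have h3 := h (p - q)
  have h4 : (inner ℝ (p - q) (p - q) : ℝ) = (inner ℝ (p - q) p : ℝ) - (inner ℝ (p - q) q : ℝ) := by
    rw [inner_sub_right]
  have h5 : ‖p - q‖ ^ 2 ≤ ε * ‖p - q‖ := by
    rw [← real_inner_self_eq_norm_sq]
    linarith
  have h6 : ‖p - q‖ ≤ ε := by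
    rcases eq_or_lt_of_le (norm_nonneg (p - q)) with h0 | h0
    · linarith
    · nlinarith
  rwa [dist_eq_norm]

open Metric in
lemma hausdorffDist_le_of_suppFn {K T : Set V} (hK : IsGauge K) (hT : IsGauge T)
    {ε : ℝ} (hε : 0 ≤ ε)
    (h1 : ∀ x, suppFn K x ≤ suppFn T x + ε * ‖x‖)
    (h2 : ∀ x, suppFn T x ≤ suppFn K x + ε * ‖x‖) :
    hausdorffDist K T ≤ ε :=
  hausdorffDist_le_of_mem_dist hε
    (exists_close_of_suppFn_le hK.1 hT hε h1)
    (exists_close_of_suppFn_le hT.1 hK hε h2)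

open Metric TopologicalSpace in
lemma continuous_suppFn_apply (x : V) :
    Continuous fun K : NonemptyCompacts V => suppFn (K : Set V) x := by
  rw [Metric.continuous_iff]
  intro K ε hε
  refine ⟨ε / (‖x‖ + 1), by positivity, fun L hL => ?_⟩
  have hxpos : (0 : ℝ) < ‖x‖ + 1 := by positivity
  have hd : hausdorffDist (L : Set V) (K : Set V) < ε / (‖x‖ + 1) := by
    rw [← NonemptyCompacts.dist_eq]; exact hL
  have hb1 := suppFn_dist_le L.isCompact L.nonempty K.isCompact K.nonempty x
  have hb2 := suppFn_dist_le K.isCompact K.nonempty L.isCompact L.nonempty x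
  have hdist_comm : hausdorffDist (K : Set V) (L : Set V)
      = hausdorffDist (L : Set V) (K : Set V) := hausdorffDist_comm
  have hnn : 0 ≤ hausdorffDist (L : Set V) (K : Set V) := hausdorffDist_nonneg
  have hxle : ‖x‖ ≤ ‖x‖ + 1 := by linarith
  have key : hausdorffDist (L : Set V) (K : Set V) * ‖x‖ < ε := by
    calc hausdorffDist (L : Set V) (K : Set V) * ‖x‖
        ≤ hausdorffDist (L : Set V) (K : Set V) * (‖x‖ + 1) := by
          exact mul_le_mul_of_nonneg_left hxle hnn
      _ < ε / (‖x‖ + 1) * (‖x‖ + 1) := by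
          exact mul_lt_mul_of_pos_right hd hxpos
      _ = ε := by field_simp
  rw [Real.dist_eq, abs_lt]
  constructor <;> [rw [hdist_comm] at hb2; skip] <;> nlinarith [hb1, hb2]

lemma suppFn_le_mul_norm_of_sphere {K : Set V} (hK : IsGauge K) {L : ℝ}
    (h : ∀ u : V, ‖u‖ = 1 → suppFn K u ≤ L) (x : V) : suppFn K x ≤ L * ‖x‖ := by
  rcases eq_or_ne x 0 with rfl | hx
  · rw [suppFn_zero hK]; simp
  · have hx' : 0 < ‖x‖ := norm_pos_iff.mpr hx
    have hu : ‖(‖x‖⁻¹ • x : V)‖ = 1 := norm_smul_inv_norm hx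
    have hxu : x = ‖x‖ • (‖x‖⁻¹ • x : V) := by
      rw [smul_smul, mul_inv_cancel₀ (ne_of_gt hx'), one_smul]
    calc suppFn K x = ‖x‖ * suppFn K (‖x‖⁻¹ • x) := by
          conv_lhs => rw [hxu]
          exact suppFn_smul_vec hK.1 hK.nonempty (norm_nonneg x) _
      _ ≤ ‖x‖ * L := mul_le_mul_of_nonneg_left (h _ hu) (norm_nonneg x)
      _ = L * ‖x‖ := mul_comm _ _

lemma suppFn_sub_le_of_sphere {K : Set V} (hK : IsGauge K) {L : ℝ}
    (h : ∀ u : V, ‖u‖ = 1 → suppFn K u ≤ L) (x y : V) :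
    suppFn K x ≤ suppFn K y + L * ‖x - y‖ := by
  have h1 : suppFn K x ≤ suppFn K y + suppFn K (x - y) := by
    have := suppFn_subadd hK.1 hK.nonempty y (x - y)
    simpa using this
  have h2 := suppFn_le_mul_norm_of_sphere hK h (x - y)
  linarith

lemma isCompact_convexJoin {s t : Set V} (hs : IsCompact s) (ht : IsCompact t) :
    IsCompact (convexJoin ℝ s t) := by
  have himg : convexJoin ℝ s t =
      (fun p : ℝ × V × V => (1 - p.1) • p.2.1 + p.1 • p.2.2) ''
        (Set.Icc (0:ℝ) 1 ×ˢ s ×ˢ t) := by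
    ext z
    constructor
    · intro hz
      rw [mem_convexJoin] at hz
      obtain ⟨a, ha, b, hb, hseg⟩ := hz
      rw [segment_eq_image] at hseg
      obtain ⟨θ, hθ, rfl⟩ := hseg
      exact ⟨(θ, a, b), ⟨hθ, ha, hb⟩, rfl⟩
    · rintro ⟨⟨θ, a, b⟩, ⟨hθ, ha, hb⟩, rfl⟩
      rw [mem_convexJoin]
      exact ⟨a, ha, b, hb, by rw [segment_eq_image]; exact ⟨θ, hθ, rfl⟩⟩
  rw [himg]
  refine (isCompact_Icc.prod (hs.prod ht)).image ?_
  fun_prop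

lemma IsGauge.add {K L : Set V} (hK : IsGauge K) (hL : IsGauge L) : IsGauge (K + L) :=
  ⟨hK.1.add hL.1, hK.2.1.add hL.2.1, by
    have := Set.add_mem_add hK.2.2 hL.2.2; simpa using this⟩

lemma IsGauge.smul {K : Set V} (hK : IsGauge K) {α : ℝ} (hα : 0 ≤ α) : IsGauge (α • K) :=
  ⟨hK.1.smul α, hK.2.1.smul α, by
    have := Set.smul_mem_smul_set (a := α) hK.2.2; simpa using this⟩

lemma IsGauge.join {K L : Set V} (hK : IsGauge K) (hL : IsGauge L) :
    IsGauge (convexHull ℝ (K ∪ L)) := by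
  refine ⟨?_, convex_convexHull ℝ _, subset_convexHull ℝ _ (Set.mem_union_left _ hK.2.2)⟩
  rw [hK.2.1.convexHull_union hL.2.1 hK.nonempty hL.nonempty]
  exact isCompact_convexJoin hK.1 hL.1

lemma suppFn_join {K L : Set V} (hK : IsGauge K) (hL : IsGauge L) (x : V) :
    suppFn (convexHull ℝ (K ∪ L)) x = max (suppFn K x) (suppFn L x) := by
  rw [suppFn_convexHull (hK.nonempty.mono Set.subset_union_left)
      (fun y => by rw [Set.image_union]; exact (suppFn_bddAbove hK.1 y).union (suppFn_bddAbove hL.1 y)),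
    suppFn_union hK.1 hK.nonempty hL.1 hL.nonempty]

open Metric TopologicalSpace Filter in
lemma isClosed_isGauge : IsClosed {K : NonemptyCompacts V | IsGauge (K : Set V)} := by
  refine IsSeqClosed.isClosed ?_
  intro Kn K hmem htend
  have hdist : Tendsto (fun n => dist (Kn n) K) atTop (nhds 0) :=
    tendsto_iff_dist_tendsto_zero.mp htend
  have hfin : ∀ n, EMetric.hausdorffEdist ((Kn n : Set V)) (K : Set V) ≠ ⊤ := fun n =>
    hausdorffEdist_ne_top_of_nonempty_of_bounded (Kn n).nonempty K.nonempty
      (Kn n).isCompact.isBounded K.isCompact.isBounded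
  have hmem_of : ∀ p : V, (∀ n, infDist p (K : Set V) ≤ 2 * dist (Kn n) K) → p ∈ (K : Set V) := by
    intro p hp
    rw [(K.isCompact.isClosed).mem_iff_infDist_zero K.nonempty]
    refine le_antisymm ?_ infDist_nonneg
    have h2 : Tendsto (fun n => 2 * dist (Kn n) K) atTop (nhds 0) := by
      have := hdist.const_mul 2; simpa using this
    exact ge_of_tendsto h2 (Eventually.of_forall hp)
  have hclose : ∀ (x : V), x ∈ (K : Set V) → ∀ n : ℕ,
      ∃ y ∈ (Kn n : Set V), dist x y ≤ dist (Kn n) K := by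
    intro x hx n
    obtain ⟨y, hy, hxy⟩ := (Kn n).isCompact.exists_infDist_eq_dist (Kn n).nonempty x
    refine ⟨y, hy, ?_⟩
    rw [← hxy]
    have : infDist x ((Kn n : Set V)) ≤ hausdorffDist (K : Set V) (Kn n : Set V) :=
      infDist_le_hausdorffDist_of_mem hx (by rw [EMetric.hausdorffEdist_comm]; exact hfin n)
    rwa [hausdorffDist_comm, ← NonemptyCompacts.dist_eq] at this
  refine ⟨K.isCompact, ?_, ?_⟩
  · -- convexity
    intro x hx y hy a b ha hb hab
    refine hmem_of _ fun n => ?_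
    obtain ⟨xn, hxn, hxd⟩ := hclose x hx n
    obtain ⟨yn, hyn, hyd⟩ := hclose y hy n
    have hpn : a • xn + b • yn ∈ (Kn n : Set V) := (hmem n).2.1 hxn hyn ha hb hab
    have hd1 : infDist (a • x + b • y) (K : Set V)
        ≤ infDist (a • xn + b • yn) (K : Set V) + dist (a • x + b • y) (a • xn + b • yn) :=
      infDist_le_infDist_add_dist
    have hd2 : infDist (a • xn + b • yn) (K : Set V) ≤ dist (Kn n) K := by
      have := infDist_le_hausdorffDist_of_mem hpn (hfin n)
      rwa [← NonemptyCompacts.dist_eq] at this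
    have hd3 : dist (a • x + b • y) (a • xn + b • yn) ≤ dist (Kn n) K := by
      have : a • x + b • y - (a • xn + b • yn) = a • (x - xn) + b • (y - yn) := by
        simp [smul_sub]; abel
      rw [dist_eq_norm, this]
      calc ‖a • (x - xn) + b • (y - yn)‖ ≤ ‖a • (x - xn)‖ + ‖b • (y - yn)‖ := norm_add_le _ _
        _ = a * ‖x - xn‖ + b * ‖y - yn‖ := by
            rw [norm_smul, norm_smul, Real.norm_of_nonneg ha, Real.norm_of_nonneg hb]
        _ ≤ a * dist (Kn n) K + b * dist (Kn n) K := by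
            rw [dist_eq_norm] at hxd hyd
            exact add_le_add (mul_le_mul_of_nonneg_left hxd ha)
              (mul_le_mul_of_nonneg_left hyd hb)
        _ = dist (Kn n) K := by rw [← add_mul, hab, one_mul]
    linarith
  · -- 0 ∈ K
    refine hmem_of 0 fun n => ?_
    have h0 : (0 : V) ∈ (Kn n : Set V) := (hmem n).2.2
    have := infDist_le_hausdorffDist_of_mem h0 (hfin n)
    rw [← NonemptyCompacts.dist_eq] at this
    have hnn : (0:ℝ) ≤ dist (Kn n) K := dist_nonneg
    linarith

section Nondeg
variable {Ξ : Type*} {S : Ξ → Set (EuclideanSpace ℝ (Fin N))}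

/-- rank-one map `x ↦ ⟪y, x⟫ • w`. -/
noncomputable def rankOne (y w : V) : V →ₗ[ℝ] V :=
  LinearMap.smulRight (innerSL ℝ y).toLinearMap w

lemma rankOne_apply (y w x : V) : rankOne y w x = (inner ℝ y x : ℝ) • w := rfl

lemma suppFn_comp_single (hg : ∀ ξ, IsGauge (S ξ)) (hnd : Nondegenerate S)
    {z : V} (hz : z ≠ 0) (y : V) :
    ∃ C, 0 ≤ C ∧ ∀ ξ, suppFn (S ξ) y ≤ C * suppFn (S ξ) z := by
  obtain ⟨C, hC⟩ := hnd (rankOne y ((‖z‖ ^ 2)⁻¹ • z))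
  refine ⟨max C 0, le_max_right _ _, fun ξ => ?_⟩
  refine suppFn_le (hg ξ).nonempty fun s hs => ?_
  obtain ⟨β, hβ0, hβC, hmem⟩ := hC ξ s hs
  obtain ⟨u, hu, hAu⟩ := hmem
  have hzz : (inner ℝ z z : ℝ) = ‖z‖ ^ 2 := real_inner_self_eq_norm_sq z
  have hz2 : (0:ℝ) < ‖z‖ ^ 2 := by have := norm_pos_iff.mpr hz; positivity
  have hkey : (inner ℝ y s : ℝ) = (inner ℝ z (rankOne y ((‖z‖ ^ 2)⁻¹ • z) s) : ℝ) := by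
    rw [rankOne_apply, real_inner_smul_right, real_inner_smul_right, hzz]
    field_simp
  have h2 : (inner ℝ z (rankOne y ((‖z‖ ^ 2)⁻¹ • z) s) : ℝ) = β * (inner ℝ z u : ℝ) := by
    rw [← hAu, real_inner_smul_right]
  have h3 : (inner ℝ z u : ℝ) ≤ suppFn (S ξ) z := le_suppFn_of_mem (hg ξ).1 hu
  have h4 : 0 ≤ suppFn (S ξ) z := suppFn_nonneg (hg ξ) z
  calc (inner ℝ y s : ℝ) = β * (inner ℝ z u : ℝ) := by rw [hkey, h2]
    _ ≤ β * suppFn (S ξ) z := mul_le_mul_of_nonneg_left h3 hβ0.le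
    _ ≤ max C 0 * suppFn (S ξ) z :=
        mul_le_mul_of_nonneg_right (hβC.trans (le_max_left _ _)) h4

lemma suppFn_family_pos (hg : ∀ ξ, IsGauge (S ξ)) (hnz : ∀ ξ, S ξ ≠ {0})
    (hsymm : ∀ ξ, S ξ = -S ξ) (hnd : Nondegenerate S)
    (ξ : Ξ) {z : V} (hz : z ≠ 0) : 0 < suppFn (S ξ) z := by
  rcases lt_or_ge 0 (suppFn (S ξ) z) with h | h
  · exact h
  exfalso
  have h0 : suppFn (S ξ) z = 0 := le_antisymm h (suppFn_nonneg (hg ξ) z)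
  have horth : ∀ y ∈ S ξ, (inner ℝ z y : ℝ) = 0 := by
    intro y hy
    have h1 : (inner ℝ z y : ℝ) ≤ 0 := h0 ▸ le_suppFn_of_mem (hg ξ).1 hy
    have hy' : -y ∈ S ξ := by
      rw [hsymm ξ] at hy; exact Set.mem_neg.mp (by simpa using hy)
    have h2 : (inner ℝ z (-y) : ℝ) ≤ 0 := h0 ▸ le_suppFn_of_mem (hg ξ).1 hy'
    rw [inner_neg_right] at h2
    linarith
  obtain ⟨y₀, hy₀, hy₀ne⟩ : ∃ y₀ ∈ S ξ, y₀ ≠ 0 := by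
    by_contra hcon
    push_neg at hcon
    apply hnz ξ
    apply Set.eq_singleton_iff_unique_mem.mpr ⟨(hg ξ).2.2, fun y hy => hcon y hy⟩
  obtain ⟨C, hC⟩ := hnd (rankOne y₀ ((‖y₀‖ ^ 2)⁻¹ • z))
  obtain ⟨β, hβ0, hβC, hmem⟩ := hC ξ y₀ hy₀
  obtain ⟨u, hu, hAu⟩ := hmem
  have hy₀2 : (0:ℝ) < ‖y₀‖ ^ 2 := by have := norm_pos_iff.mpr hy₀ne; positivity
  have hA : rankOne y₀ ((‖y₀‖ ^ 2)⁻¹ • z) y₀ = z := by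
    rw [rankOne_apply, real_inner_self_eq_norm_sq, smul_smul]
    field_simp
    rw [one_smul]
  rw [hA] at hAu
  have : (inner ℝ z z : ℝ) = β * (inner ℝ z u : ℝ) := by
    rw [← hAu, real_inner_smul_right]
  rw [horth u hu, mul_zero, real_inner_self_eq_norm_sq] at this
  have : ‖z‖ = 0 := by
    have := this; nlinarith [norm_nonneg z, sq_nonneg ‖z‖]
  exact hz (norm_eq_zero.mp this)

lemma suppFn_smul_abs {K : Set V} (hK : IsCompact K) (hne : K.Nonempty)
    (hsymm : K = -K) (c : ℝ) (v : V) : suppFn K (c • v) = |c| * suppFn K v := by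
  rcases le_or_gt 0 c with hc | hc
  · rw [suppFn_smul_vec hK hne hc, abs_of_nonneg hc]
  · have : c • v = (-c) • (-v) := by simp
    rw [this, suppFn_smul_vec hK hne (by linarith), suppFn_neg_symm hK hne hsymm,
      abs_of_neg hc]

lemma suppFn_sum_le {K : Set V} (hK : IsGauge K) {ι : Type*} (s : Finset ι) (f : ι → V) :
    suppFn K (∑ i ∈ s, f i) ≤ ∑ i ∈ s, suppFn K (f i) := by
  classical
  induction s using Finset.cons_induction with
  | empty => simp [suppFn_zero hK]
  | cons a s ha ih =>
    rw [Finset.sum_cons, Finset.sum_cons]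
    calc suppFn K (f a + ∑ i ∈ s, f i)
        ≤ suppFn K (f a) + suppFn K (∑ i ∈ s, f i) := suppFn_subadd hK.1 hK.nonempty _ _
      _ ≤ _ := by linarith

lemma abs_apply_le_norm (x : V) (i : Fin N) : |x i| ≤ ‖x‖ := by
  have h1 : (inner ℝ (EuclideanSpace.single i (1:ℝ)) x : ℝ) = x i := by
    rw [EuclideanSpace.inner_single_left]; simp
  have h2 := abs_real_inner_le_norm (EuclideanSpace.single i (1:ℝ)) x
  rw [h1, EuclideanSpace.norm_single] at h2
  simpa using h2

lemma suppFn_uniform_comp (hg : ∀ ξ, IsGauge (S ξ)) (hsymm : ∀ ξ, S ξ = -S ξ)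
    (hnd : Nondegenerate S) {z : V} (hz : z ≠ 0) :
    ∃ C, 0 ≤ C ∧ ∀ ξ (x : V), suppFn (S ξ) x ≤ C * ‖x‖ * suppFn (S ξ) z := by
  classical
  have hsingle : ∀ i : Fin N, ∃ C, 0 ≤ C ∧ ∀ ξ,
      suppFn (S ξ) (EuclideanSpace.single i (1:ℝ)) ≤ C * suppFn (S ξ) z :=
    fun i => suppFn_comp_single hg hnd hz _
  choose Ci hCi0 hCi using hsingle
  refine ⟨∑ i, Ci i, Finset.sum_nonneg fun i _ => hCi0 i, fun ξ x => ?_⟩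
  have hdec : x = ∑ i, x i • EuclideanSpace.single i (1:ℝ) := by
    have := (EuclideanSpace.basisFun (Fin N) ℝ).sum_repr x
    simp only [EuclideanSpace.basisFun_apply, EuclideanSpace.basisFun_repr] at this
    exact this.symm
  have hsum : suppFn (S ξ) x ≤ ∑ i, suppFn (S ξ) (x i • EuclideanSpace.single i (1:ℝ)) := by
    conv_lhs => rw [hdec]
    exact suppFn_sum_le (hg ξ) _ _
  have hterm : ∀ i : Fin N, suppFn (S ξ) (x i • EuclideanSpace.single i (1:ℝ))
      ≤ Ci i * ‖x‖ * suppFn (S ξ) z := by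
    intro i
    rw [suppFn_smul_abs (hg ξ).1 (hg ξ).nonempty (hsymm ξ)]
    have h1 := hCi i ξ
    have h2 := abs_apply_le_norm x i
    have h3 := suppFn_nonneg (hg ξ) (EuclideanSpace.single i (1:ℝ))
    have h4 := suppFn_nonneg (hg ξ) z
    nlinarith [abs_nonneg (x i)]
  calc suppFn (S ξ) x ≤ ∑ i, suppFn (S ξ) (x i • EuclideanSpace.single i (1:ℝ)) := hsum
    _ ≤ ∑ i, Ci i * ‖x‖ * suppFn (S ξ) z := Finset.sum_le_sum fun i _ => hterm i
    _ = (∑ i, Ci i) * ‖x‖ * suppFn (S ξ) z := by rw [← Finset.sum_mul, ← Finset.sum_mul]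

end Nondeg

section Main
variable {Ξ : Type*} [Nonempty Ξ] {S : Ξ → Set (EuclideanSpace ℝ (Fin N))}

/-- The sup appearing on the right-hand side. -/
noncomputable def ratioSup (S : Ξ → Set (EuclideanSpace ℝ (Fin N))) {n : ℕ}
    (x : Fin (n + 1) → EuclideanSpace ℝ (Fin N)) (z : EuclideanSpace ℝ (Fin N)) : ℝ :=
  ⨆ ξ, suppFn (S ξ) z / ∑ k, suppFn (S ξ) (x k)

/-- The inequality condition. -/
def Cond (S : Ξ → Set (EuclideanSpace ℝ (Fin N))) (T : Set (EuclideanSpace ℝ (Fin N))) : Prop :=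
  ∀ (n : ℕ) (x : Fin (n + 1) → EuclideanSpace ℝ (Fin N)),
    (∃ k, x k ≠ 0) → ∀ z : EuclideanSpace ℝ (Fin N),
      suppFn T z ≤ (∑ k, suppFn T (x k)) * ratioSup S x z

variable (hg : ∀ ξ, IsGauge (S ξ)) (hnz : ∀ ξ, S ξ ≠ {0})
  (hsymm : ∀ ξ, S ξ = -S ξ) (hnd : Nondegenerate S)

lemma sum_suppFn_pos (hg : ∀ ξ, IsGauge (S ξ)) (hnz : ∀ ξ, S ξ ≠ {0})
    (hsymm : ∀ ξ, S ξ = -S ξ) (hnd : Nondegenerate S)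
    {n : ℕ} {x : Fin (n + 1) → V} (hx : ∃ k, x k ≠ 0) (ξ : Ξ) :
    0 < ∑ k, suppFn (S ξ) (x k) := by
  obtain ⟨k₀, hk₀⟩ := hx
  refine Finset.sum_pos' (fun k _ => suppFn_nonneg (hg ξ) _) ⟨k₀, Finset.mem_univ _, ?_⟩
  exact suppFn_family_pos hg hnz hsymm hnd ξ hk₀

lemma ratio_bddAbove (hg : ∀ ξ, IsGauge (S ξ)) (hnz : ∀ ξ, S ξ ≠ {0})
    (hsymm : ∀ ξ, S ξ = -S ξ) (hnd : Nondegenerate S)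
    {n : ℕ} {x : Fin (n + 1) → V} (hx : ∃ k, x k ≠ 0) (z : V) :
    BddAbove (Set.range fun ξ => suppFn (S ξ) z / ∑ k, suppFn (S ξ) (x k)) := by
  obtain ⟨k₀, hk₀⟩ := hx
  obtain ⟨C, hC0, hC⟩ := suppFn_comp_single hg hnd hk₀ z
  refine ⟨C, ?_⟩
  rintro _ ⟨ξ, rfl⟩
  have hpos := sum_suppFn_pos hg hnz hsymm hnd ⟨k₀, hk₀⟩ ξ
  rw [div_le_iff₀ hpos]
  have h1 := hC ξ
  have h2 : suppFn (S ξ) (x k₀) ≤ ∑ k, suppFn (S ξ) (x k) :=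
    Finset.single_le_sum (fun k _ => suppFn_nonneg (hg ξ) _) (Finset.mem_univ k₀)
  nlinarith
  
lemma ratioSup_nonneg (hg : ∀ ξ, IsGauge (S ξ)) (hnz : ∀ ξ, S ξ ≠ {0})
    (hsymm : ∀ ξ, S ξ = -S ξ) (hnd : Nondegenerate S)
    {n : ℕ} {x : Fin (n + 1) → V} (hx : ∃ k, x k ≠ 0) (z : V) :
    0 ≤ ratioSup S x z :=
  Real.iSup_nonneg fun ξ => div_nonneg (suppFn_nonneg (hg ξ) z)
    (sum_suppFn_pos hg hnz hsymm hnd hx ξ).le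

lemma cond_range (hg : ∀ ξ, IsGauge (S ξ)) (hnz : ∀ ξ, S ξ ≠ {0})
    (hsymm : ∀ ξ, S ξ = -S ξ) (hnd : Nondegenerate S) (η : Ξ) : Cond S (S η) := by
  intro n x hx z
  have hpos := sum_suppFn_pos hg hnz hsymm hnd hx η
  have hle : suppFn (S η) z / ∑ k, suppFn (S η) (x k) ≤ ratioSup S x z :=
    le_ciSup (ratio_bddAbove hg hnz hsymm hnd hx z) η
  have := mul_le_mul_of_nonneg_left hle hpos.le
  rw [mul_div_cancel₀ _ (ne_of_gt hpos)] at this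
  exact this

lemma cond_add (hg : ∀ ξ, IsGauge (S ξ)) (hnz : ∀ ξ, S ξ ≠ {0})
    (hsymm : ∀ ξ, S ξ = -S ξ) (hnd : Nondegenerate S)
    {K L : Set V} (hK : IsGauge K) (hL : IsGauge L)
    (hcK : Cond S K) (hcL : Cond S L) : Cond S (K + L) := by
  intro n x hx z
  have h1 := hcK n x hx z
  have h2 := hcL n x hx z
  have hadd : ∀ y : V, suppFn (K + L) y = suppFn K y + suppFn L y := fun y =>
    suppFn_add hK.1 hK.nonempty hL.1 hL.nonempty y
  rw [hadd]
  simp only [hadd]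
  rw [Finset.sum_add_distrib, add_mul]
  exact add_le_add h1 h2

lemma cond_smul (hg : ∀ ξ, IsGauge (S ξ))
    {K : Set V} (hK : IsGauge K) {α : ℝ} (hα : 0 ≤ α)
    (hcK : Cond S K) : Cond S (α • K) := by
  intro n x hx z
  have h1 := hcK n x hx z
  have hs : ∀ y : V, suppFn (α • K) y = α * suppFn K y := fun y =>
    suppFn_smul_set hK.1 hK.nonempty hα y
  rw [hs]
  simp only [hs]
  rw [← Finset.mul_sum, mul_assoc]
  exact mul_le_mul_of_nonneg_left h1 hα

lemma cond_join (hg : ∀ ξ, IsGauge (S ξ)) (hnz : ∀ ξ, S ξ ≠ {0})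
    (hsymm : ∀ ξ, S ξ = -S ξ) (hnd : Nondegenerate S)
    {K L : Set V} (hK : IsGauge K) (hL : IsGauge L)
    (hcK : Cond S K) (hcL : Cond S L) : Cond S (convexHull ℝ (K ∪ L)) := by
  intro n x hx z
  have hj : ∀ y : V, suppFn (convexHull ℝ (K ∪ L)) y = max (suppFn K y) (suppFn L y) :=
    suppFn_join hK hL
  rw [hj]
  simp only [hj]
  have hR := ratioSup_nonneg hg hnz hsymm hnd hx z
  have hsum_le : ∀ M : Set V, (∀ k : Fin (n+1), suppFn M (x k) ≤
      max (suppFn K (x k)) (suppFn L (x k))) →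
      (∑ k, suppFn M (x k)) ≤ ∑ k, max (suppFn K (x k)) (suppFn L (x k)) := by
    intro M hM; exact Finset.sum_le_sum fun k _ => hM k
  refine max_le ?_ ?_
  · calc suppFn K z ≤ (∑ k, suppFn K (x k)) * ratioSup S x z := hcK n x hx z
      _ ≤ (∑ k, max (suppFn K (x k)) (suppFn L (x k))) * ratioSup S x z := by
          refine mul_le_mul_of_nonneg_right (Finset.sum_le_sum fun k _ => le_max_left _ _) hR
  · calc suppFn L z ≤ (∑ k, suppFn L (x k)) * ratioSup S x z := hcL n x hx z
      _ ≤ (∑ k, max (suppFn K (x k)) (suppFn L (x k))) * ratioSup S x z := by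
          refine mul_le_mul_of_nonneg_right (Finset.sum_le_sum fun k _ => le_max_right _ _) hR

open TopologicalSpace in
lemma cond_hausdorffClosed : IsHausdorffClosed {K : Set V | IsGauge K ∧ Cond S K} := by
  unfold IsHausdorffClosed
  have heq : {K : NonemptyCompacts V | (K : Set V) ∈ {K : Set V | IsGauge K ∧ Cond S K}}
      = {K : NonemptyCompacts V | IsGauge (K : Set V)} ∩
        ⋂ (n : ℕ) (x : Fin (n+1) → V) (_ : ∃ k, x k ≠ 0) (z : V),
          {K : NonemptyCompacts V |
            suppFn (K : Set V) z ≤ (∑ k, suppFn (K : Set V) (x k)) * ratioSup S x z} := by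
    ext K
    simp only [Set.mem_setOf_eq, Set.mem_inter_iff, Set.mem_iInter]
    exact ⟨fun ⟨h1, h2⟩ => ⟨h1, fun n x hx z => h2 n x hx z⟩,
      fun ⟨h1, h2⟩ => ⟨h1, fun n x hx z => h2 n x hx z⟩⟩
  rw [heq]
  refine isClosed_isGauge.inter ?_
  refine isClosed_iInter fun n => isClosed_iInter fun x => isClosed_iInter fun hx =>
    isClosed_iInter fun z => ?_
  exact isClosed_le (continuous_suppFn_apply z)
    ((continuous_finset_sum _ fun k _ => continuous_suppFn_apply (x k)).mul continuous_const)

lemma forward_dir (hg : ∀ ξ, IsGauge (S ξ)) (hnz : ∀ ξ, S ξ ≠ {0})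
    (hsymm : ∀ ξ, S ξ = -S ξ) (hnd : Nondegenerate S)
    {T : Set V} (hT : T ∈ piUp (Set.range S)) : Cond S T := by
  have hC₀ : {K : Set V | IsGauge K ∧ Cond S K} ∈
      {C : Set (Set V) | (∀ K ∈ C, IsGauge K) ∧ IsHausdorffClosed C ∧ Set.range S ⊆ C ∧
        (∀ K ∈ C, ∀ L ∈ C, K + L ∈ C) ∧
        (∀ K ∈ C, ∀ α : ℝ, 0 ≤ α → α • K ∈ C) ∧
        (∀ K ∈ C, ∀ L ∈ C, convexHull ℝ (K ∪ L) ∈ C)} := by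
    refine ⟨fun K hK => hK.1, cond_hausdorffClosed, ?_, ?_, ?_, ?_⟩
    · rintro _ ⟨η, rfl⟩
      exact ⟨hg η, cond_range hg hnz hsymm hnd η⟩
    · rintro K ⟨hK1, hK2⟩ L ⟨hL1, hL2⟩
      exact ⟨hK1.add hL1, cond_add hg hnz hsymm hnd hK1 hL1 hK2 hL2⟩
    · rintro K ⟨hK1, hK2⟩ α hα
      exact ⟨hK1.smul hα, cond_smul hg hK1 hα hK2⟩
    · rintro K ⟨hK1, hK2⟩ L ⟨hL1, hL2⟩
      exact ⟨hK1.join hL1, cond_join hg hnz hsymm hnd hK1 hL1 hK2 hL2⟩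
  exact (hT _ hC₀).2

end Main

lemma suppFn_singleton_zero (y : V) : suppFn ({0} : Set V) y = 0 := by
  unfold suppFn
  rw [Set.image_singleton]
  simp

lemma isGauge_singleton_zero : IsGauge ({0} : Set V) :=
  ⟨isCompact_singleton, convex_singleton 0, rfl⟩

lemma zero_smul_set_eq {K : Set V} (hne : K.Nonempty) : (0:ℝ) • K = ({0} : Set V) := by
  rw [Set.zero_smul_set hne]; rfl

section KeyLP
variable {Ξ : Type*} [Nonempty Ξ] {S : Ξ → Set (EuclideanSpace ℝ (Fin N))}

lemma keyLP (hg : ∀ ξ, IsGauge (S ξ)) (hnz : ∀ ξ, S ξ ≠ {0})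
    (hsymm : ∀ ξ, S ξ = -S ξ) (hnd : Nondegenerate S)
    {T : Set V} (hTg : IsGauge T) (hcond : Cond S T)
    (hTpos : ∀ z : V, z ≠ 0 → 0 < suppFn T z)
    {C : Set (Set V)} (hCg : ∀ K ∈ C, IsGauge K)
    (hCrange : Set.range S ⊆ C)
    (hCadd : ∀ K ∈ C, ∀ L ∈ C, K + L ∈ C)
    (hCsmul : ∀ K ∈ C, ∀ α : ℝ, 0 ≤ α → α • K ∈ C)
    {m : ℕ} {w : Fin (m+1) → V} (hw : ∀ i, w i ≠ 0)
    {z : V} (hz : z ≠ 0) {ε : ℝ} (hε : 0 < ε) :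
    ∃ K ∈ C, (∀ i, suppFn K (w i) ≤ suppFn T (w i)) ∧
      suppFn T z - ε ≤ suppFn K z := by
  classical
  by_contra hcon
  push_neg at hcon
  -- hcon : ∀ K ∈ C, (∀ i, suppFn K (w i) ≤ suppFn T (w i)) → suppFn K z < suppFn T z - ε
  set c : Fin (m+1) → ℝ := fun i => suppFn T (w i) with hc_def
  have hc : ∀ i, 0 < c i := fun i => hTpos _ (hw i)
  obtain ⟨i₁, _, hi₁⟩ := Finset.exists_min_image Finset.univ c ⟨0, Finset.mem_univ 0⟩
  set cmin : ℝ := c i₁ with hcmin_def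
  have hcmin : 0 < cmin := hc i₁
  have hcmin_le : ∀ i, cmin ≤ c i := fun i => hi₁ i (Finset.mem_univ i)
  have hTz : 0 < suppFn T z := hTpos z hz
  -- {0} ∈ C
  have h0C : ({0} : Set V) ∈ C := by
    have := hCsmul _ (hCrange ⟨Classical.arbitrary Ξ, rfl⟩) 0 le_rfl
    rwa [zero_smul_set_eq (hg _).nonempty] at this
  -- the convex set E
  set E : Set ((Fin (m+1) → ℝ) × ℝ) :=
    {p | ∃ K ∈ C, (∀ i, suppFn K (w i) ≤ p.1 i) ∧ p.2 ≤ suppFn K z} with hE_def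
  have hEconv : Convex ℝ E := by
    rintro p ⟨K₁, hK₁C, hK₁f, hK₁z⟩ q ⟨K₂, hK₂C, hK₂f, hK₂z⟩ a b ha hb hab
    have hK₁g := hCg _ hK₁C
    have hK₂g := hCg _ hK₂C
    refine ⟨a • K₁ + b • K₂,
      hCadd _ (hCsmul _ hK₁C a ha) _ (hCsmul _ hK₂C b hb), ?_, ?_⟩
    · intro i
      rw [suppFn_add (hK₁g.smul ha).1 (hK₁g.smul ha).nonempty
          (hK₂g.smul hb).1 (hK₂g.smul hb).nonempty,
        suppFn_smul_set hK₁g.1 hK₁g.nonempty ha, suppFn_smul_set hK₂g.1 hK₂g.nonempty hb]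
      exact add_le_add (mul_le_mul_of_nonneg_left (hK₁f i) ha)
        (mul_le_mul_of_nonneg_left (hK₂f i) hb)
    · rw [suppFn_add (hK₁g.smul ha).1 (hK₁g.smul ha).nonempty
          (hK₂g.smul hb).1 (hK₂g.smul hb).nonempty,
        suppFn_smul_set hK₁g.1 hK₁g.nonempty ha, suppFn_smul_set hK₂g.1 hK₂g.nonempty hb]
      exact add_le_add (mul_le_mul_of_nonneg_left hK₁z ha)
        (mul_le_mul_of_nonneg_left hK₂z hb)
  -- smul-stability of E
  have hEsmul : ∀ t : ℝ, 0 ≤ t → ∀ p ∈ E, t • p ∈ E := by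
    rintro t ht p ⟨K, hKC, hKf, hKz⟩
    have hKg := hCg _ hKC
    refine ⟨t • K, hCsmul _ hKC t ht, ?_, ?_⟩
    · intro i
      rw [suppFn_smul_set hKg.1 hKg.nonempty ht]
      have : (t • p).1 i = t * p.1 i := rfl
      rw [this]
      exact mul_le_mul_of_nonneg_left (hKf i) ht
    · rw [suppFn_smul_set hKg.1 hKg.nonempty ht]
      have : (t • p).2 = t * p.2 := rfl
      rw [this]
      exact mul_le_mul_of_nonneg_left hKz ht
  -- the target point is not in the closure of E
  set p₀ : (Fin (m+1) → ℝ) × ℝ := (c, suppFn T z) with hp₀_def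
  have hp₀ : p₀ ∉ closure E := by
    intro hmem
    set η : ℝ := ε * cmin / (cmin + suppFn T z) with hη_def
    have hη : 0 < η := by positivity
    obtain ⟨q, hqE, hqd⟩ := Metric.mem_closure_iff.mp hmem η hη
    obtain ⟨K, hKC, hKf, hKz⟩ := hqE
    have hq1 : ∀ i, q.1 i ≤ c i + η := by
      intro i
      have h1 : dist (q.1 i) (c i) ≤ dist q.1 c := dist_le_pi_dist q.1 c i
      have h2 : dist q.1 c ≤ dist p₀ q := by
        rw [dist_comm q.1 c]
        exact (le_max_left _ _).trans (le_of_eq rfl)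
      have := (h1.trans h2).trans hqd.le
      rw [Real.dist_eq] at this
      have := abs_le.mp this
      linarith [this.1]
    have hq2 : suppFn T z - η ≤ q.2 := by
      have h2 : dist p₀.2 q.2 ≤ dist p₀ q := le_max_right _ _
      have := h2.trans hqd.le
      rw [Real.dist_eq] at this
      have := abs_le.mp this
      simp only [hp₀_def] at this
      linarith [this.1]
    set θ : ℝ := cmin / (cmin + η) with hθ_def
    have hθpos : 0 < θ := by positivity
    have hθle : ∀ i, θ * (c i + η) ≤ c i := by
      intro i
      rw [hθ_def, div_mul_eq_mul_div, div_le_iff₀ (by positivity)]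
      have := hcmin_le i
      nlinarith
    have hfeas : ∀ i, suppFn (θ • K) (w i) ≤ suppFn T (w i) := by
      intro i
      have hKg := hCg _ hKC
      rw [suppFn_smul_set hKg.1 hKg.nonempty hθpos.le]
      calc θ * suppFn K (w i) ≤ θ * q.1 i :=
            mul_le_mul_of_nonneg_left (hKf i) hθpos.le
        _ ≤ θ * (c i + η) := mul_le_mul_of_nonneg_left (hq1 i) hθpos.le
        _ ≤ c i := hθle i
    have hlt := hcon _ (hCsmul _ hKC θ hθpos.le) hfeas
    have hKg := hCg _ hKC
    rw [suppFn_smul_set hKg.1 hKg.nonempty hθpos.le] at hlt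
    have hchain : θ * (suppFn T z - η) ≤ θ * suppFn K z := by
      refine mul_le_mul_of_nonneg_left ?_ hθpos.le
      linarith
    -- algebra: θ * (suppFn T z - η) ≥ suppFn T z - ε
    have halg : suppFn T z - ε ≤ θ * (suppFn T z - η) := by
      rw [hθ_def, hη_def]
      have h1 : 0 < cmin + suppFn T z := by positivity
      have h2 : 0 < cmin + ε * cmin / (cmin + suppFn T z) := by positivity
      rw [div_mul_eq_mul_div, le_div_iff₀ h2]
      have hexp : ε * cmin / (cmin + suppFn T z) * (cmin + suppFn T z) = ε * cmin := by
        field_simp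
      nlinarith [hexp, mul_pos hε hcmin, mul_pos hcmin hTz, sq_nonneg ε]
    linarith
  -- separation
  obtain ⟨f, u, hfE, hfp⟩ := geometric_hahn_banach_closed_point
    (hEconv.closure) isClosed_closure hp₀
  have hu_pos : 0 < u := by
    have h0E : ((0 : Fin (m+1) → ℝ), (0:ℝ)) ∈ E :=
      ⟨{0}, h0C, fun i => by rw [suppFn_singleton_zero]; exact le_rfl,
        by rw [suppFn_singleton_zero]⟩
    have := hfE _ (subset_closure h0E)
    simpa [Prod.mk_zero_zero] using this
  have hfE_nonpos : ∀ q ∈ E, f q ≤ 0 := by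
    intro q hq
    by_contra hpos
    push_neg at hpos
    have ht : (0:ℝ) < (u + 1) / f q := by positivity
    have := hfE _ (subset_closure (hEsmul _ ht.le q hq))
    rw [map_smul, smul_eq_mul, div_mul_cancel₀ _ (ne_of_gt hpos)] at this
    linarith
  set lam : Fin (m+1) → ℝ := fun i => -(f (Pi.single i 1, 0)) with hlam_def
  set lam0 : ℝ := f (0, 1) with hlam0_def
  have hflin : ∀ (v : Fin (m+1) → ℝ) (r : ℝ),
      f (v, r) = -(∑ i, v i * lam i) + r * lam0 := by
    intro v r
    have hsplit : ((v, r) : (Fin (m+1) → ℝ) × ℝ)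
        = (∑ i, v i • ((Pi.single i 1 : Fin (m+1) → ℝ), (0:ℝ)))
          + r • ((0 : Fin (m+1) → ℝ), (1:ℝ)) := by
      rw [Prod.ext_iff]
      constructor
      · rw [Prod.fst_add, Prod.fst_sum]
        simp only [Prod.smul_fst, Prod.smul_snd, smul_eq_mul]
        have : ∀ i : Fin (m+1), v i • (Pi.single i 1 : Fin (m+1) → ℝ)
            = Pi.single i (v i) := by
          intro i
          rw [← Pi.single_smul, smul_eq_mul, mul_one]
        simp only [this, Finset.univ_sum_single]
        simp
      · rw [Prod.snd_add, Prod.snd_sum]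
        simp
    rw [hsplit, map_add, map_sum, map_smul]
    simp only [map_smul, smul_eq_mul]
    rw [hlam0_def]
    congr 1
    rw [hlam_def]
    rw [← Finset.sum_neg_distrib]
    refine Finset.sum_congr rfl fun i _ => by ring
  have hlam_nonneg : ∀ i, 0 ≤ lam i := by
    intro i
    have hmemE : ((Pi.single i 1 : Fin (m+1) → ℝ), (0:ℝ)) ∈ E := by
      refine ⟨{0}, h0C, fun j => ?_, by rw [suppFn_singleton_zero]⟩
      rw [suppFn_singleton_zero]
      rcases eq_or_ne j i with rfl | hji
      · simp
      · simp [Pi.single_apply, hji]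
    have := hfE_nonpos _ hmemE
    have hbeta : lam i = -(f (Pi.single i 1, 0)) := rfl
    rw [hbeta]
    linarith
  have hlam0_nonneg : 0 ≤ lam0 := by
    have hmemE : ((0 : Fin (m+1) → ℝ), (-1:ℝ)) ∈ E := by
      refine ⟨{0}, h0C, fun j => by rw [suppFn_singleton_zero]; simp, ?_⟩
      rw [suppFn_singleton_zero]; simp
    have h1 := hfE_nonpos _ hmemE
    have heq : ((0 : Fin (m+1) → ℝ), (-1:ℝ))
        = (-1 : ℝ) • ((0 : Fin (m+1) → ℝ), (1:ℝ)) := by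
      rw [Prod.ext_iff]; constructor <;> simp
    rw [heq, map_smul, smul_eq_mul] at h1
    rw [hlam0_def]
    linarith
  have hxi : ∀ ξ, lam0 * suppFn (S ξ) z ≤ ∑ i, lam i * suppFn (S ξ) (w i) := by
    intro ξ
    have hmemE : ((fun i => suppFn (S ξ) (w i)), suppFn (S ξ) z) ∈ E :=
      ⟨S ξ, hCrange ⟨ξ, rfl⟩, fun i => le_rfl, le_rfl⟩
    have h1 := hfE_nonpos _ hmemE
    rw [hflin] at h1
    have h2 : ∑ i, suppFn (S ξ) (w i) * lam i = ∑ i, lam i * suppFn (S ξ) (w i) :=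
      Finset.sum_congr rfl fun i _ => mul_comm _ _
    rw [h2] at h1
    rw [mul_comm lam0 (suppFn (S ξ) z)]
    linarith
  have hfp_pos : ∑ i, lam i * c i < lam0 * suppFn T z := by
    have h1 : u < f (c, suppFn T z) := hfp
    rw [hflin] at h1
    have h2 : ∑ i, c i * lam i = ∑ i, lam i * c i :=
      Finset.sum_congr rfl fun i _ => mul_comm _ _
    rw [h2] at h1
    rw [mul_comm lam0 (suppFn T z)]
    linarith
  have hsum_nonneg : 0 ≤ ∑ i, lam i * c i :=
    Finset.sum_nonneg fun i _ => mul_nonneg (hlam_nonneg i) (hc i).le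
  have hlam0_pos : 0 < lam0 := by
    rcases eq_or_lt_of_le hlam0_nonneg with h | h
    · exfalso; rw [← h] at hfp_pos; simp at hfp_pos; linarith
    · exact h
  have hlam_ex : ∃ i, 0 < lam i := by
    by_contra hno
    push_neg at hno
    have hall : ∀ i, lam i = 0 := fun i => le_antisymm (hno i) (hlam_nonneg i)
    have := hxi (Classical.arbitrary Ξ)
    simp only [hall, zero_mul, Finset.sum_const_zero] at this
    have hpos := suppFn_family_pos hg hnz hsymm hnd (Classical.arbitrary Ξ) hz
    nlinarith
  obtain ⟨i₀, hi₀⟩ := hlam_ex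
  -- apply the hypothesis to the tuple (lam i • w i)
  set x : Fin (m+1) → V := fun i => lam i • w i with hx_def
  have hx : ∃ k, x k ≠ 0 := ⟨i₀, smul_ne_zero (ne_of_gt hi₀) (hw i₀)⟩
  have hmain := hcond m x hx z
  have hsumT : ∑ k, suppFn T (x k) = ∑ i, lam i * c i := by
    refine Finset.sum_congr rfl fun i _ => ?_
    exact suppFn_smul_vec hTg.1 hTg.nonempty (hlam_nonneg i) (w i)
  have hsumS : ∀ ξ, ∑ k, suppFn (S ξ) (x k) = ∑ i, lam i * suppFn (S ξ) (w i) := by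
    intro ξ
    refine Finset.sum_congr rfl fun i _ => ?_
    exact suppFn_smul_vec (hg ξ).1 (hg ξ).nonempty (hlam_nonneg i) (w i)
  have hratio : ratioSup S x z ≤ 1 / lam0 := by
    unfold ratioSup
    refine ciSup_le fun ξ => ?_
    have hdenpos : 0 < ∑ k, suppFn (S ξ) (x k) := sum_suppFn_pos hg hnz hsymm hnd hx ξ
    rw [div_le_div_iff₀ hdenpos hlam0_pos, one_mul, hsumS ξ, mul_comm]
    exact hxi ξ
  have hfinal : suppFn T z ≤ (∑ i, lam i * c i) * (1 / lam0) :=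
    calc suppFn T z ≤ (∑ k, suppFn T (x k)) * ratioSup S x z := hmain
      _ = (∑ i, lam i * c i) * ratioSup S x z := by rw [hsumT]
      _ ≤ (∑ i, lam i * c i) * (1 / lam0) :=
          mul_le_mul_of_nonneg_left hratio hsum_nonneg
  have hlt : (∑ i, lam i * c i) * (1 / lam0) < suppFn T z := by
    rw [mul_one_div, div_lt_iff₀ hlam0_pos, mul_comm]
    exact hfp_pos
  linarith
end KeyLP

noncomputable def joinFam : ∀ {n : ℕ}, (Fin (n+1) → Set (EuclideanSpace ℝ (Fin N))) →
    Set (EuclideanSpace ℝ (Fin N))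
  | 0, K => K 0
  | (_+1), K => convexHull ℝ (joinFam (fun i => K i.castSucc) ∪ K (Fin.last _))

lemma joinFam_isGauge : ∀ {n : ℕ} (K : Fin (n+1) → Set V), (∀ i, IsGauge (K i)) →
    IsGauge (joinFam K)
  | 0, K, h => h 0
  | (n+1), K, h =>
    (joinFam_isGauge (fun i => K i.castSucc) (fun i => h i.castSucc)).join (h (Fin.last _))

lemma joinFam_mem {C : Set (Set V)}
    (hCjoin : ∀ K ∈ C, ∀ L ∈ C, convexHull ℝ (K ∪ L) ∈ C) :
    ∀ {n : ℕ} (K : Fin (n+1) → Set V), (∀ i, K i ∈ C) → joinFam K ∈ C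
  | 0, K, h => h 0
  | (n+1), K, h =>
    hCjoin _ (joinFam_mem hCjoin (fun i => K i.castSucc) (fun i => h i.castSucc))
      _ (h (Fin.last _))

lemma le_suppFn_joinFam : ∀ {n : ℕ} (K : Fin (n+1) → Set V), (∀ i, IsGauge (K i)) →
    ∀ (i : Fin (n+1)) (x : V), suppFn (K i) x ≤ suppFn (joinFam K) x
  | 0, K, _, i, x => by
    have : i = 0 := Fin.fin_one_eq_zero i
    rw [this]; exact le_rfl
  | (n+1), K, h, i, x => by
    have hmax : suppFn (joinFam K) x
        = max (suppFn (joinFam fun j => K j.castSucc) x) (suppFn (K (Fin.last _)) x) :=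
      suppFn_join (joinFam_isGauge _ fun j => h j.castSucc) (h (Fin.last _)) x
    refine Fin.lastCases ?_ ?_ i
    · rw [hmax]; exact le_max_right _ _
    · intro j
      rw [hmax]
      exact le_trans (le_suppFn_joinFam _ (fun j => h j.castSucc) j x) (le_max_left _ _)

lemma suppFn_joinFam_le : ∀ {n : ℕ} (K : Fin (n+1) → Set V), (∀ i, IsGauge (K i)) →
    ∀ (x : V) (b : ℝ), (∀ i, suppFn (K i) x ≤ b) → suppFn (joinFam K) x ≤ b
  | 0, K, _, x, b, h => h 0
  | (n+1), K, hg, x, b, h => by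
    have hmax : suppFn (joinFam K) x
        = max (suppFn (joinFam fun j => K j.castSucc) x) (suppFn (K (Fin.last _)) x) :=
      suppFn_join (joinFam_isGauge _ fun j => hg j.castSucc) (hg (Fin.last _)) x
    rw [hmax]
    exact max_le (suppFn_joinFam_le _ (fun j => hg j.castSucc) x b fun j => h j.castSucc)
      (h (Fin.last _))

lemma sphere_diff_bound {J T : Set V} (hJ : IsGauge J) (hT : IsGauge T) {η : ℝ}
    (h : ∀ u : V, ‖u‖ = 1 → suppFn J u ≤ suppFn T u + η) (x : V) :
    suppFn J x ≤ suppFn T x + η * ‖x‖ := by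
  rcases eq_or_ne x 0 with rfl | hx
  · rw [suppFn_zero hJ, suppFn_zero hT]; simp
  · have hx' : 0 < ‖x‖ := norm_pos_iff.mpr hx
    have hu : ‖(‖x‖⁻¹ • x : V)‖ = 1 := norm_smul_inv_norm hx
    have hxu : x = ‖x‖ • (‖x‖⁻¹ • x : V) := by
      rw [smul_smul, mul_inv_cancel₀ (ne_of_gt hx'), one_smul]
    have h1 : suppFn J x = ‖x‖ * suppFn J (‖x‖⁻¹ • x) := by
      conv_lhs => rw [hxu]
      exact suppFn_smul_vec hJ.1 hJ.nonempty (norm_nonneg x) _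
    have h2 : suppFn T x = ‖x‖ * suppFn T (‖x‖⁻¹ • x) := by
      conv_lhs => rw [hxu]
      exact suppFn_smul_vec hT.1 hT.nonempty (norm_nonneg x) _
    rw [h1, h2]
    have h3 := h _ hu
    nlinarith

lemma finset_to_tuple (F : Finset V) (hF : F.Nonempty) :
    ∃ (n : ℕ) (w : Fin (n+1) → V), (∀ i, w i ∈ F) ∧ ∀ v ∈ F, ∃ i, w i = v := by
  classical
  obtain ⟨n, hn⟩ : ∃ n, F.toList.length = n + 1 := by
    refine ⟨F.toList.length - 1, ?_⟩
    have : F.toList.length ≠ 0 := by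
      rw [Finset.length_toList]
      have := Finset.card_pos.mpr hF
      omega
    omega
  refine ⟨n, fun i => F.toList.get (Fin.cast hn.symm i), fun i => ?_, fun v hv => ?_⟩
  · rw [← Finset.mem_toList]
    exact List.get_mem _ _
  · rw [← Finset.mem_toList] at hv
    obtain ⟨j, hj⟩ := List.mem_iff_get.mp hv
    exact ⟨Fin.cast hn j, by simpa using hj⟩

lemma cond_pos {Ξ : Type*} [Nonempty Ξ] {S : Ξ → Set (EuclideanSpace ℝ (Fin N))}
    {T : Set V} (hcond : Cond S T) (hTg : IsGauge T) (hTne : T ≠ {0}) :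
    ∀ z : V, z ≠ 0 → 0 < suppFn T z := by
  obtain ⟨p, hpT, hp0⟩ : ∃ p ∈ T, p ≠ 0 := by
    by_contra hcontra
    push_neg at hcontra
    exact hTne (Set.eq_singleton_iff_unique_mem.mpr ⟨hTg.2.2, fun y hy => hcontra y hy⟩)
  intro z hz
  by_contra hle
  push_neg at hle
  have h0 : suppFn T z = 0 := le_antisymm hle (suppFn_nonneg hTg z)
  have hall : ∀ w : V, suppFn T w ≤ 0 := by
    intro ww
    have := hcond 0 (fun _ => z) ⟨0, hz⟩ ww
    rw [Fin.sum_univ_one, h0, zero_mul] at this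
    exact this
  have h1 : (inner ℝ p p : ℝ) ≤ suppFn T p := le_suppFn_of_mem hTg.1 hpT
  have h2 := hall p
  rw [real_inner_self_eq_norm_sq] at h1
  have : ‖p‖ = 0 := by nlinarith [norm_nonneg p, sq_nonneg ‖p‖]
  exact hp0 (norm_eq_zero.mp this)

section Backward
variable {Ξ : Type*} [Nonempty Ξ] {S : Ξ → Set (EuclideanSpace ℝ (Fin N))}

open Metric TopologicalSpace Filter in
lemma backward_dir (hg : ∀ ξ, IsGauge (S ξ)) (hnz : ∀ ξ, S ξ ≠ {0})
    (hsymm : ∀ ξ, S ξ = -S ξ) (hnd : Nondegenerate S) (hN : N ≠ 0)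
    {T : Set V} (hTg : IsGauge T) (hcond : Cond S T) :
    T ∈ piUp (Set.range S) := by
  classical
  refine Set.mem_sInter.mpr fun C hC => ?_
  obtain ⟨hCg, hCclosed, hCrange, hCadd, hCsmul, hCjoin⟩ := hC
  rcases eq_or_ne T ({0} : Set V) with rfl | hTne
  · have := hCsmul _ (hCrange ⟨Classical.arbitrary Ξ, rfl⟩) 0 le_rfl
    rwa [zero_smul_set_eq (hg _).nonempty] at this
  have hTpos : ∀ z : V, z ≠ 0 → 0 < suppFn T z := cond_pos hcond hTg hTne
  -- the distinguished direction e₀ and comparison constant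
  set e₀ : V := EuclideanSpace.single (⟨0, Nat.pos_of_ne_zero hN⟩ : Fin N) 1 with he₀_def
  have he₀norm : ‖e₀‖ = 1 := by rw [he₀_def, EuclideanSpace.norm_single]; norm_num
  have he₀ne : e₀ ≠ 0 := by
    intro h; rw [h, norm_zero] at he₀norm; norm_num at he₀norm
  obtain ⟨Cs, hCs0, hCs⟩ := suppFn_uniform_comp hg hsymm hnd he₀ne
  -- the refined family D
  set D : Set (Set V) :=
    C ∩ {K | IsGauge K ∧ ∀ x : V, suppFn K x ≤ Cs * ‖x‖ * suppFn K e₀} with hD_def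
  have hDg : ∀ K ∈ D, IsGauge K := fun K hK => hCg K hK.1
  have hDrange : Set.range S ⊆ D := by
    rintro _ ⟨ξ, rfl⟩
    exact ⟨hCrange ⟨ξ, rfl⟩, hg ξ, fun x => hCs ξ x⟩
  have hDadd : ∀ K ∈ D, ∀ L ∈ D, K + L ∈ D := by
    rintro K ⟨hKC, hKg, hKb⟩ L ⟨hLC, hLg, hLb⟩
    refine ⟨hCadd K hKC L hLC, hKg.add hLg, fun x => ?_⟩
    rw [suppFn_add hKg.1 hKg.nonempty hLg.1 hLg.nonempty,
      suppFn_add hKg.1 hKg.nonempty hLg.1 hLg.nonempty, mul_add]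
    exact add_le_add (hKb x) (hLb x)
  have hDsmul : ∀ K ∈ D, ∀ α : ℝ, 0 ≤ α → α • K ∈ D := by
    rintro K ⟨hKC, hKg, hKb⟩ α hα
    refine ⟨hCsmul K hKC α hα, hKg.smul hα, fun x => ?_⟩
    rw [suppFn_smul_set hKg.1 hKg.nonempty hα, suppFn_smul_set hKg.1 hKg.nonempty hα]
    calc α * suppFn K x ≤ α * (Cs * ‖x‖ * suppFn K e₀) :=
          mul_le_mul_of_nonneg_left (hKb x) hα
      _ = Cs * ‖x‖ * (α * suppFn K e₀) := by ring
  have hDjoin : ∀ K ∈ D, ∀ L ∈ D, convexHull ℝ (K ∪ L) ∈ D := by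
    rintro K ⟨hKC, hKg, hKb⟩ L ⟨hLC, hLg, hLb⟩
    refine ⟨hCjoin K hKC L hLC, hKg.join hLg, fun x => ?_⟩
    rw [suppFn_join hKg hLg, suppFn_join hKg hLg]
    have hnn : 0 ≤ Cs * ‖x‖ := by positivity
    refine max_le ?_ ?_
    · exact (hKb x).trans (mul_le_mul_of_nonneg_left (le_max_left _ _) hnn)
    · exact (hLb x).trans (mul_le_mul_of_nonneg_left (le_max_right _ _) hnn)
  have hDclosed : IsHausdorffClosed D := by
    unfold IsHausdorffClosed
    have heq : {K : NonemptyCompacts V | (K : Set V) ∈ D}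
        = {K : NonemptyCompacts V | (K : Set V) ∈ C} ∩
          ({K : NonemptyCompacts V | IsGauge (K : Set V)} ∩
            ⋂ (x : V), {K : NonemptyCompacts V |
              suppFn (K : Set V) x ≤ Cs * ‖x‖ * suppFn (K : Set V) e₀}) := by
      ext K
      simp only [Set.mem_setOf_eq, Set.mem_inter_iff, Set.mem_iInter, hD_def]
    rw [heq]
    refine hCclosed.inter (isClosed_isGauge.inter (isClosed_iInter fun x => ?_))
    exact isClosed_le (continuous_suppFn_apply x)
      (continuous_const.mul (continuous_suppFn_apply e₀))
  -- bound for T on the sphere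
  obtain ⟨R₀, hR₀⟩ := isBounded_iff_forall_norm_le.mp hTg.1.isBounded
  set R : ℝ := max R₀ 0 with hR_def
  have hR0 : 0 ≤ R := le_max_right _ _
  have hRT : ∀ u : V, ‖u‖ = 1 → suppFn T u ≤ R := by
    intro u hu
    refine suppFn_le hTg.nonempty fun y hy => ?_
    calc (inner ℝ u y : ℝ) ≤ ‖u‖ * ‖y‖ := real_inner_le_norm u y
      _ = ‖y‖ := by rw [hu, one_mul]
      _ ≤ R₀ := hR₀ y hy
      _ ≤ R := le_max_left _ _
  set L : ℝ := Cs * suppFn T e₀ with hL_def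
  have hL0 : 0 ≤ L := mul_nonneg hCs0 (suppFn_nonneg hTg e₀)
  -- approximation step
  have happrox : ∀ ε : ℝ, 0 < ε → ∃ K ∈ D, hausdorffDist K T ≤ ε := by
    intro ε hε
    set δ : ℝ := ε / (2 * (L + R + 1)) with hδ_def
    have hδpos : 0 < δ := by positivity
    obtain ⟨t, htsub, htfin, hcover⟩ :=
      finite_cover_balls_of_compact (isCompact_sphere (0:V) 1) hδpos
    set F : Finset V := insert e₀ htfin.toFinset with hF_def
    have hFsub : ∀ v ∈ F, ‖v‖ = 1 := by
      intro v hv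
      rcases Finset.mem_insert.mp hv with rfl | hv'
      · exact he₀norm
      · have := htsub (htfin.mem_toFinset.mp hv')
        rwa [mem_sphere, dist_zero_right] at this
    obtain ⟨m, w, hwmem, hwsurj⟩ := finset_to_tuple F ⟨e₀, Finset.mem_insert_self _ _⟩
    have hw0 : ∀ i, w i ≠ 0 := by
      intro i h
      have := hFsub _ (hwmem i)
      rw [h, norm_zero] at this; norm_num at this
    have hwnorm : ∀ i, ‖w i‖ = 1 := fun i => hFsub _ (hwmem i)
    -- apply keyLP to each direction
    have hKi : ∀ i : Fin (m+1), ∃ K ∈ D,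
        (∀ j, suppFn K (w j) ≤ suppFn T (w j)) ∧
        suppFn T (w i) - ε/2 ≤ suppFn K (w i) := fun i =>
      keyLP hg hnz hsymm hnd hTg hcond hTpos hDg hDrange hDadd hDsmul hw0
        (hw0 i) (half_pos hε)
    choose K hKD hKfeas hKlow using hKi
    have hKg : ∀ i, IsGauge (K i) := fun i => hDg _ (hKD i)
    set J : Set V := joinFam K with hJ_def
    have hJD : J ∈ D := joinFam_mem hDjoin K hKD
    have hJg : IsGauge J := joinFam_isGauge K hKg
    -- uniform sphere bound for the K i
    have hKe₀ : ∀ i, suppFn (K i) e₀ ≤ suppFn T e₀ := by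
      intro i
      obtain ⟨j, hj⟩ := hwsurj e₀ (Finset.mem_insert_self _ _)
      have := hKfeas i j
      rwa [hj] at this
    have hKsphere : ∀ i (u : V), ‖u‖ = 1 → suppFn (K i) u ≤ L := by
      intro i u hu
      have hb := (hKD i).2.2 u
      rw [hu, mul_one] at hb
      calc suppFn (K i) u ≤ Cs * suppFn (K i) e₀ := hb
        _ ≤ Cs * suppFn T e₀ := mul_le_mul_of_nonneg_left (hKe₀ i) hCs0
        _ = L := hL_def.symm
    -- the two sphere estimates
    set η : ℝ := ε/2 + (L + R) * δ with hη_def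
    have hη0 : 0 ≤ η := by positivity
    have hup : ∀ u : V, ‖u‖ = 1 → suppFn J u ≤ suppFn T u + η := by
      intro u hu
      obtain ⟨v, hvt, huv⟩ : ∃ v ∈ t, u ∈ ball v δ := by
        have := hcover (mem_sphere_zero_iff_norm.mpr hu)
        simpa using this
      have hvF : v ∈ F := Finset.mem_insert_of_mem (htfin.mem_toFinset.mpr hvt)
      obtain ⟨j, hj⟩ := hwsurj v hvF
      have hdist : ‖u - v‖ ≤ δ := by
        rw [← dist_eq_norm]
        exact (mem_ball.mp huv).le
      refine suppFn_joinFam_le K hKg u _ fun i => ?_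
      have h1 : suppFn (K i) u ≤ suppFn (K i) v + L * ‖u - v‖ :=
        suppFn_sub_le_of_sphere (hKg i) (hKsphere i) u v
      have h2 : suppFn (K i) v ≤ suppFn T v := by rw [← hj]; exact hKfeas i j
      have h3 : suppFn T v ≤ suppFn T u + R * ‖v - u‖ :=
        suppFn_sub_le_of_sphere hTg hRT v u
      have h4 : ‖v - u‖ = ‖u - v‖ := norm_sub_rev v u
      have h5 : L * ‖u - v‖ ≤ L * δ := mul_le_mul_of_nonneg_left hdist hL0
      have h6 : R * ‖u - v‖ ≤ R * δ := mul_le_mul_of_nonneg_left hdist hR0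
      have hε2 : 0 ≤ ε/2 := by positivity
      rw [hη_def]
      rw [h4] at h3
      nlinarith
    have hlow : ∀ u : V, ‖u‖ = 1 → suppFn T u ≤ suppFn J u + η := by
      intro u hu
      obtain ⟨v, hvt, huv⟩ : ∃ v ∈ t, u ∈ ball v δ := by
        have := hcover (mem_sphere_zero_iff_norm.mpr hu)
        simpa using this
      have hvF : v ∈ F := Finset.mem_insert_of_mem (htfin.mem_toFinset.mpr hvt)
      obtain ⟨j, hj⟩ := hwsurj v hvF
      have hdist : ‖u - v‖ ≤ δ := by
        rw [← dist_eq_norm]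
        exact (mem_ball.mp huv).le
      have h1 : suppFn T u ≤ suppFn T v + R * ‖u - v‖ :=
        suppFn_sub_le_of_sphere hTg hRT u v
      have h2 : suppFn T v - ε/2 ≤ suppFn (K j) v := by rw [← hj]; exact hKlow j
      have h3 : suppFn (K j) v ≤ suppFn (K j) u + L * ‖v - u‖ :=
        suppFn_sub_le_of_sphere (hKg j) (hKsphere j) v u
      have h4 : suppFn (K j) u ≤ suppFn J u := le_suppFn_joinFam K hKg j u
      have h5 : ‖v - u‖ = ‖u - v‖ := norm_sub_rev v u
      have h6 : L * ‖u - v‖ ≤ L * δ := mul_le_mul_of_nonneg_left hdist hL0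
      have h7 : R * ‖u - v‖ ≤ R * δ := mul_le_mul_of_nonneg_left hdist hR0
      rw [hη_def]
      rw [h5] at h3
      nlinarith
    have hdH : hausdorffDist J T ≤ η :=
      hausdorffDist_le_of_suppFn hJg hTg hη0
        (fun x => sphere_diff_bound hJg hTg hup x)
        (fun x => sphere_diff_bound hTg hJg hlow x)
    have hηε : η ≤ ε := by
      have hkey : δ * (2 * (L + R + 1)) = ε := by
        rw [hδ_def]; field_simp
      have h1 : (L + R) * δ ≤ ε / 2 := by nlinarith
      rw [hη_def]
      linarith
    exact ⟨J, hJD, hdH.trans hηε⟩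
  -- pass to the limit
  have hseq : ∀ j : ℕ, ∃ K ∈ D, hausdorffDist K T ≤ 1 / ((j:ℝ) + 1) := fun j =>
    happrox _ (by positivity)
  choose Kf hKfD hKfd using hseq
  set κ : ℕ → NonemptyCompacts V := fun j =>
    ⟨⟨Kf j, (hDg _ (hKfD j)).1⟩, (hDg _ (hKfD j)).nonempty⟩ with hκ_def
  set τ : NonemptyCompacts V := ⟨⟨T, hTg.1⟩, hTg.nonempty⟩ with hτ_def
  have htend : Tendsto κ atTop (nhds τ) := by
    rw [tendsto_iff_dist_tendsto_zero]
    have hbound : ∀ j : ℕ, dist (κ j) τ ≤ 1 / ((j:ℝ) + 1) := by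
      intro j
      rw [NonemptyCompacts.dist_eq]
      exact hKfd j
    exact squeeze_zero (fun j => dist_nonneg) hbound
      tendsto_one_div_add_atTop_nhds_zero_nat
  have hmem : τ ∈ {K : NonemptyCompacts V | (K : Set V) ∈ D} :=
    hDclosed.mem_of_tendsto htend (Eventually.of_forall fun j => hKfD j)
  exact hmem.1

end Backward

end Aux

/-- **Theorem 4.1.**  For a nondegenerate family of nonzero symmetric gauges
`(S ξ)` in `ℝ^N`, a gauge `T` belongs to `π↑(Ξ)` iff for every `n ≥ 1`, all
vectors `x 0, …, x n` not all zero, and every `z`,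
`h_T(z) ≤ (Σ_k h_T(x k)) · sup_ξ [h_{S ξ}(z) / Σ_k h_{S ξ}(x k)]`. -/
theorem mem_piUp_iff_sup_bound {N : ℕ} {Ξ : Type*} [Nonempty Ξ]
    (S : Ξ → Set (EuclideanSpace ℝ (Fin N)))
    (hg : ∀ ξ, IsGauge (S ξ))
    (hnz : ∀ ξ, S ξ ≠ {0})
    (hsymm : ∀ ξ, S ξ = -S ξ)
    (hnd : Nondegenerate S)
    (T : Set (EuclideanSpace ℝ (Fin N))) (hT : IsGauge T) :
    T ∈ piUp (Set.range S) ↔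
      ∀ (n : ℕ) (x : Fin (n + 1) → EuclideanSpace ℝ (Fin N)),
        (∃ k, x k ≠ 0) →
        ∀ z : EuclideanSpace ℝ (Fin N),
          suppFn T z ≤ (∑ k, suppFn T (x k)) *
            ⨆ ξ, suppFn (S ξ) z / ∑ k, suppFn (S ξ) (x k) := by
  rcases eq_or_ne N 0 with rfl | hN
  · exfalso
    have hv0 : ∀ v : EuclideanSpace ℝ (Fin 0), v = 0 := by
      intro v
      have h := EuclideanSpace.norm_eq v
      simp only [Finset.univ_eq_empty, Finset.sum_empty, Real.sqrt_zero] at h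
      exact norm_eq_zero.mp h
    exact hnz (Classical.arbitrary Ξ) (Set.eq_singleton_iff_unique_mem.mpr
      ⟨(hg _).2.2, fun y _ => hv0 y⟩)
  · constructor
    · intro hmem
      exact forward_dir hg hnz hsymm hnd hmem
    · intro h
      exact backward_dir hg hnz hsymm hnd hN hT h
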